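/- Let q > 3 and α ∈ (0, α*(q)). Define g(t) = ψ(t)²/t^{q-3} on [x₀(α), x₁(α)], where ψ(t) = f'(t)² - 2 f(t) f''(t) and f(t) = t² - 1 - α t^q. Then g' changes sign exactly twice on [x₀(α), x₁(α)]: there exist points x₀(α) < a < b < x₁(α) such that g' < 0 on (x₀(α), a), g' > 0 on (a, b), and g' < 0 on (b, x₁(α)). -/

import Mathlib

open Set Filter MeasureTheory

noncomputable def fQ (q α t : ℝ) : ℝ := t ^ 2 - 1 - α * t ^ q

noncomputable def alphaStar (q : ℝ) : ℝ := 2 / (q - 2) * ((q - 2) / q) ^ (q / 2)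

noncomputable def x0 (q α : ℝ) : ℝ := sInf {t : ℝ | 0 < t ∧ fQ q α t = 0}

noncomputable def x1 (q α : ℝ) : ℝ := sSup {t : ℝ | 0 < t ∧ fQ q α t = 0}

noncomputable def Iq (q α : ℝ) : ℝ := ∫ t in x0 q α..x1 q α, 1 / Real.sqrt (fQ q α t)

noncomputable def fQd1 (q α t : ℝ) : ℝ := 2 * t - α * q * t ^ (q - 1)

noncomputable def fQd2 (q α t : ℝ) : ℝ := 2 - α * q * (q - 1) * t ^ (q - 2)

noncomputable def fQd3 (q α t : ℝ) : ℝ := -(α * q * (q - 1) * (q - 2) * t ^ (q - 3))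

noncomputable def psiQ (q α t : ℝ) : ℝ := fQd1 q α t ^ 2 - 2 * fQ q α t * fQd2 q α t

/-! ### Auxiliary definitions -/

noncomputable def HQ (q α t : ℝ) : ℝ :=
  2 * (2 * α * q * (q - 1) * (q - 2)) * t ^ (q - 2) * fQ q α t - (q - 3) * psiQ q α t

noncomputable def phiQ (q α t : ℝ) : ℝ :=
  (q + 3) * t ^ 2 - (q - 1) - α * (3 * q - 1) * t ^ q

/-! ### Generic analysis of `A t² - B - C t^q` -/

lemma hasDerivAt_quad_rpow (A B C q : ℝ) {t : ℝ} (ht : 0 < t) :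
    HasDerivAt (fun t : ℝ => A * t ^ 2 - B - C * t ^ q)
      (2 * A * t - C * q * t ^ (q - 1)) t := by
  have h1 : HasDerivAt (fun t : ℝ => t ^ (2 : ℕ)) (2 * t) t := by
    simpa using hasDerivAt_pow 2 t
  have h2 : HasDerivAt (fun t : ℝ => t ^ q) (q * t ^ (q - 1)) t :=
    Real.hasDerivAt_rpow_const (Or.inl ht.ne')
  have h := ((h1.const_mul A).sub_const B).sub (h2.const_mul C)
  refine h.congr_deriv ?_
  ring

lemma contOn_quad_rpow (A B C q : ℝ) (hq : 0 < q) {s : Set ℝ} (_hs : s ⊆ Ici 0) :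
    ContinuousOn (fun t : ℝ => A * t ^ 2 - B - C * t ^ q) s := by
  intro t _hts
  have h : ContinuousAt (fun t : ℝ => A * t ^ 2 - B - C * t ^ q) t := by
    exact ((continuousAt_const.mul ((continuous_pow 2).continuousAt)).sub continuousAt_const).sub
      (continuousAt_const.mul (Real.continuousAt_rpow_const t q (Or.inr hq.le)))
  exact h.continuousWithinAt

lemma quad_rpow_roots (q A B C : ℝ) (hq : 2 < q) (hA : 0 < A) (hB : 0 < B) (hC : 0 < C)
    (hw : ∃ w, 0 < w ∧ 0 < A * w ^ 2 - B - C * w ^ q) :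
    ∃ r₀ m r₁ : ℝ, 0 < r₀ ∧ r₀ < m ∧ m < r₁ ∧
      m ^ (q - 2) = 2 * A / (C * q) ∧
      A * r₀ ^ 2 - B - C * r₀ ^ q = 0 ∧
      A * r₁ ^ 2 - B - C * r₁ ^ q = 0 ∧
      (∀ t, 0 < t → t < r₀ → A * t ^ 2 - B - C * t ^ q < 0) ∧
      (∀ t, r₀ < t → t < r₁ → 0 < A * t ^ 2 - B - C * t ^ q) ∧
      (∀ t, r₁ < t → A * t ^ 2 - B - C * t ^ q < 0) ∧
      (∀ t, 0 < t → A * t ^ 2 - B - C * t ^ q = 0 → t = r₀ ∨ t = r₁) := by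
  have hq0 : 0 < q := by linarith
  have hq2 : 0 < q - 2 := by linarith
  set F : ℝ → ℝ := fun t => A * t ^ 2 - B - C * t ^ q with hF
  set m : ℝ := (2 * A / (C * q)) ^ (q - 2)⁻¹ with hm
  have hbase : 0 < 2 * A / (C * q) := by positivity
  have hmpos : 0 < m := Real.rpow_pos_of_pos hbase _
  have hmq : m ^ (q - 2) = 2 * A / (C * q) := by
    rw [hm, ← Real.rpow_mul hbase.le, inv_mul_cancel₀ hq2.ne', Real.rpow_one]
  have hderivpos : ∀ t, 0 < t → t < m → 0 < 2 * A * t - C * q * t ^ (q - 1) := by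
    intro t ht htm
    have e1 : t ^ (q - 1) = t * t ^ (q - 2) := by
      rw [show q - 1 = 1 + (q - 2) by ring, Real.rpow_add ht, Real.rpow_one]
    have h2 : t ^ (q - 2) < 2 * A / (C * q) := by
      rw [← hmq]; exact Real.rpow_lt_rpow ht.le htm hq2
    have h3 : C * q * t ^ (q - 2) < 2 * A := by
      have := (lt_div_iff₀ (by positivity : (0:ℝ) < C * q)).mp h2
      linarith
    rw [e1]
    calc (0:ℝ) = t * 0 := by ring
    _ < t * (2 * A - C * q * t ^ (q - 2)) := by
        apply mul_lt_mul_of_pos_left _ ht; linarith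
    _ = 2 * A * t - C * q * (t * t ^ (q - 2)) := by ring
  have hderivneg : ∀ t, m < t → 2 * A * t - C * q * t ^ (q - 1) < 0 := by
    intro t htm
    have ht : 0 < t := lt_trans hmpos htm
    have e1 : t ^ (q - 1) = t * t ^ (q - 2) := by
      rw [show q - 1 = 1 + (q - 2) by ring, Real.rpow_add ht, Real.rpow_one]
    have h2 : 2 * A / (C * q) < t ^ (q - 2) := by
      rw [← hmq]; exact Real.rpow_lt_rpow hmpos.le htm hq2
    have h3 : 2 * A < C * q * t ^ (q - 2) := by
      have := (div_lt_iff₀ (by positivity : (0:ℝ) < C * q)).mp h2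
      linarith
    rw [e1]
    calc 2 * A * t - C * q * (t * t ^ (q - 2)) = t * (2 * A - C * q * t ^ (q - 2)) := by ring
    _ < t * 0 := by apply mul_lt_mul_of_pos_left _ ht; linarith
    _ = 0 := by ring
  have hmono : StrictMonoOn F (Icc 0 m) := by
    apply strictMonoOn_of_deriv_pos (convex_Icc 0 m)
      (contOn_quad_rpow A B C q hq0 (fun x hx => hx.1))
    intro t ht
    rw [interior_Icc] at ht
    rw [(hasDerivAt_quad_rpow A B C q ht.1).deriv]
    exact hderivpos t ht.1 ht.2
  have hanti : StrictAntiOn F (Ici m) := by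
    apply strictAntiOn_of_deriv_neg (convex_Ici m)
      (contOn_quad_rpow A B C q hq0 (fun x hx => le_trans hmpos.le hx))
    intro t ht
    rw [interior_Ici] at ht
    rw [(hasDerivAt_quad_rpow A B C q (lt_trans hmpos ht)).deriv]
    exact hderivneg t ht
  have hF0 : F 0 = -B := by
    simp [hF, Real.zero_rpow hq0.ne']
  obtain ⟨w, hw0, hwF⟩ := hw
  have hFm : 0 < F m := by
    rcases le_or_gt w m with h | h
    · have := hmono.monotoneOn (mem_Icc.mpr ⟨hw0.le, h⟩) (mem_Icc.mpr ⟨hmpos.le, le_refl m⟩) h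
      calc (0:ℝ) < F w := hwF
      _ ≤ F m := this
    · have := hanti (mem_Ici.mpr (le_refl m)) (mem_Ici.mpr h.le) h
      calc (0:ℝ) < F w := hwF
      _ < F m := this
  have h0m : (0:ℝ) ≤ m := hmpos.le
  have hobt : (0:ℝ) ∈ Ioo (F 0) (F m) := by rw [hF0]; exact ⟨by linarith, hFm⟩
  obtain ⟨r₀, hr₀mem, hr₀⟩ := intermediate_value_Ioo h0m
    (contOn_quad_rpow A B C q hq0 (fun x hx => hx.1)) hobt
  set T : ℝ := max (m + 1) ((A / C + 1) ^ (q - 2)⁻¹) with hT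
  have hmT : m < T := lt_of_lt_of_le (lt_add_one m) (le_max_left _ _)
  have hT0 : 0 < T := lt_trans hmpos hmT
  have hTbase : (0:ℝ) < A / C + 1 := by positivity
  have hTpow : A / C + 1 ≤ T ^ (q - 2) := by
    have h1 : ((A / C + 1) ^ (q - 2)⁻¹) ^ (q - 2) ≤ T ^ (q - 2) :=
      Real.rpow_le_rpow (Real.rpow_pos_of_pos hTbase _).le (le_max_right _ _) hq2.le
    rwa [← Real.rpow_mul hTbase.le, inv_mul_cancel₀ hq2.ne', Real.rpow_one] at h1
  have hFT : F T < 0 := by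
    have e1 : T ^ q = T ^ (2:ℕ) * T ^ (q - 2) := by
      rw [← Real.rpow_natCast T 2, ← Real.rpow_add hT0]
      congr 1; push_cast; ring
    have hT2 : (0:ℝ) < T ^ (2:ℕ) := by positivity
    have h2 : C * T ^ q ≥ (A + C) * T ^ (2:ℕ) := by
      rw [e1]
      have e2 : C * (T ^ (2:ℕ) * T ^ (q - 2)) = (C * T ^ (q - 2)) * T ^ (2:ℕ) := by ring
      rw [e2]
      apply mul_le_mul_of_nonneg_right _ hT2.le
      have e3 : C * (A / C + 1) = A + C := by field_simp
      nlinarith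
    show A * T ^ 2 - B - C * T ^ q < 0
    nlinarith
  have hobt2 : (0:ℝ) ∈ Ioo (F T) (F m) := ⟨hFT, hFm⟩
  obtain ⟨r₁, hr₁mem, hr₁⟩ := intermediate_value_Ioo' hmT.le
    (contOn_quad_rpow A B C q hq0 (fun x hx => le_trans hmpos.le hx.1)) hobt2
  obtain ⟨hr₀0, hr₀m⟩ := hr₀mem
  have hr₀ : F r₀ = 0 := hr₀
  have hr₁ : F r₁ = 0 := hr₁
  obtain ⟨hmr₁, hr₁T⟩ := hr₁mem
  refine ⟨r₀, m, r₁, hr₀0, hr₀m, hmr₁, hmq, hr₀, hr₁, ?_, ?_, ?_, ?_⟩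
  · intro t ht0 htr
    show F t < 0
    have h := hmono (mem_Icc.mpr ⟨ht0.le, by linarith⟩) (mem_Icc.mpr ⟨hr₀0.le, hr₀m.le⟩) htr
    rw [hr₀] at h; exact h
  · intro t hrt htr
    show 0 < F t
    rcases le_or_gt t m with h | h
    · have h2 := hmono (mem_Icc.mpr ⟨hr₀0.le, hr₀m.le⟩) (mem_Icc.mpr ⟨by linarith, h⟩) hrt
      rw [hr₀] at h2; exact h2
    · have h2 := hanti (mem_Ici.mpr h.le) (mem_Ici.mpr hmr₁.le) htr
      rw [hr₁] at h2; exact h2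
  · intro t hrt
    show F t < 0
    have h2 := hanti (mem_Ici.mpr hmr₁.le) (mem_Ici.mpr (by linarith : m ≤ t)) hrt
    rw [hr₁] at h2; exact h2
  · intro t ht0 htF
    have htF : F t = 0 := htF
    rcases le_or_gt t m with h | h
    · left
      rcases lt_trichotomy t r₀ with h2 | h2 | h2
      · exfalso
        have := hmono (mem_Icc.mpr ⟨ht0.le, h⟩) (mem_Icc.mpr ⟨hr₀0.le, hr₀m.le⟩) h2
        rw [htF, hr₀] at this; exact lt_irrefl 0 this
      · exact h2
      · exfalso
        have := hmono (mem_Icc.mpr ⟨hr₀0.le, hr₀m.le⟩) (mem_Icc.mpr ⟨ht0.le, h⟩) h2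
        rw [htF, hr₀] at this; exact lt_irrefl 0 this
    · right
      rcases lt_trichotomy t r₁ with h2 | h2 | h2
      · exfalso
        have := hanti (mem_Ici.mpr h.le) (mem_Ici.mpr hmr₁.le) h2
        rw [htF, hr₁] at this; exact lt_irrefl 0 this
      · exact h2
      · exfalso
        have := hanti (mem_Ici.mpr hmr₁.le) (mem_Ici.mpr h.le) h2
        rw [htF, hr₁] at this; exact lt_irrefl 0 this

/-! ### Derivatives of the concrete functions -/

lemma hasDerivAt_fQ (q α : ℝ) {t : ℝ} (ht : 0 < t) :
    HasDerivAt (fQ q α) (fQd1 q α t) t := by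
  have h1 : HasDerivAt (fun t : ℝ => t ^ (2 : ℕ)) (2 * t) t := by
    simpa using hasDerivAt_pow 2 t
  have h2 : HasDerivAt (fun t : ℝ => t ^ q) (q * t ^ (q - 1)) t :=
    Real.hasDerivAt_rpow_const (Or.inl ht.ne')
  have h := (h1.sub_const 1).sub (h2.const_mul α)
  unfold fQ fQd1
  refine h.congr_deriv ?_
  ring

lemma hasDerivAt_fQd1 (q α : ℝ) {t : ℝ} (ht : 0 < t) :
    HasDerivAt (fQd1 q α) (fQd2 q α t) t := by
  have h1 : HasDerivAt (fun t : ℝ => 2 * t) 2 t := by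
    simpa using (hasDerivAt_id t).const_mul (2:ℝ)
  have h2 : HasDerivAt (fun t : ℝ => t ^ (q - 1)) ((q - 1) * t ^ (q - 2)) t := by
    have := Real.hasDerivAt_rpow_const (p := q - 1) (Or.inl ht.ne')
    rwa [show q - 1 - 1 = q - 2 by ring] at this
  have h := h1.sub (h2.const_mul (α * q))
  unfold fQd1 fQd2
  refine h.congr_deriv ?_
  ring

lemma hasDerivAt_fQd2 (q α : ℝ) {t : ℝ} (ht : 0 < t) :
    HasDerivAt (fQd2 q α) (fQd3 q α t) t := by
  have h2 : HasDerivAt (fun t : ℝ => t ^ (q - 2)) ((q - 2) * t ^ (q - 3)) t := by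
    have := Real.hasDerivAt_rpow_const (p := q - 2) (Or.inl ht.ne')
    rwa [show q - 2 - 1 = q - 3 by ring] at this
  have h := (h2.const_mul (α * q * (q - 1))).const_sub 2
  unfold fQd2 fQd3
  refine h.congr_deriv ?_
  ring

lemma hasDerivAt_psiQ (q α : ℝ) {t : ℝ} (ht : 0 < t) :
    HasDerivAt (psiQ q α) (2 * α * q * (q - 1) * (q - 2) * t ^ (q - 3) * fQ q α t) t := by
  have h1 := (hasDerivAt_fQd1 q α ht).pow 2
  have h2 := ((hasDerivAt_fQ q α ht).const_mul 2).mul (hasDerivAt_fQd2 q α ht)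
  have h := h1.sub h2
  unfold psiQ
  refine h.congr_deriv ?_
  unfold fQd3
  push_cast
  ring

lemma hasDerivAt_HQ (q α : ℝ) {t : ℝ} (ht : 0 < t) :
    HasDerivAt (HQ q α) (2 * α * q * (q - 1) * (q - 2) * t ^ (q - 3) * phiQ q α t) t := by
  have h1 : HasDerivAt (fun t : ℝ => t ^ (q - 2)) ((q - 2) * t ^ (q - 3)) t := by
    have := Real.hasDerivAt_rpow_const (p := q - 2) (Or.inl ht.ne')
    rwa [show q - 2 - 1 = q - 3 by ring] at this
  have h2 := (h1.const_mul (2 * (2 * α * q * (q - 1) * (q - 2)))).mul (hasDerivAt_fQ q α ht)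
  have h3 := (hasDerivAt_psiQ q α ht).const_mul (q - 3)
  have h := h2.sub h3
  unfold HQ phiQ
  refine h.congr_deriv ?_
  have e1 : t ^ (q - 2) = t * t ^ (q - 3) := by
    rw [show q - 2 = 1 + (q - 3) by ring, Real.rpow_add ht, Real.rpow_one]
  have e2 : t ^ (q - 1) = t ^ (2:ℕ) * t ^ (q - 3) := by
    rw [show q - 1 = ((2:ℕ):ℝ) + (q - 3) by push_cast; ring, Real.rpow_add ht,
      Real.rpow_natCast]
  have e3 : t ^ q = t ^ (3:ℕ) * t ^ (q - 3) := by
    rw [← Real.rpow_natCast t 3, ← Real.rpow_add ht]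
    congr 1
    push_cast; ring
  unfold fQ fQd1
  rw [e1, e2, e3]
  ring

lemma deriv_gQ (q α : ℝ) {t : ℝ} (ht : 0 < t) :
    deriv (fun t => psiQ q α t ^ 2 / t ^ (q - 3)) t =
      psiQ q α t * HQ q α t / t ^ (q - 2) := by
  have hd3 : (0:ℝ) < t ^ (q - 3) := Real.rpow_pos_of_pos ht _
  have hnum := (hasDerivAt_psiQ q α ht).pow 2
  have hden : HasDerivAt (fun t : ℝ => t ^ (q - 3)) ((q - 3) * t ^ (q - 4)) t := by
    have := Real.hasDerivAt_rpow_const (p := q - 3) (Or.inl ht.ne')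
    rwa [show q - 3 - 1 = q - 4 by ring] at this
  have h := (hnum.div hden hd3.ne').deriv
  rw [show (fun t => psiQ q α t ^ 2 / t ^ (q - 3)) = (psiQ q α ^ 2 / fun t => t ^ (q - 3)) from rfl, h, Pi.pow_apply]
  unfold HQ
  have eA : t ^ (q - 2) = t * t ^ (q - 3) := by
    rw [show q - 2 = 1 + (q - 3) by ring, Real.rpow_add ht, Real.rpow_one]
  have eB : t ^ (q - 3) = t * t ^ (q - 4) := by
    rw [show q - 3 = 1 + (q - 4) by ring, Real.rpow_add ht, Real.rpow_one]
  have hu : (0:ℝ) < t ^ (q - 4) := Real.rpow_pos_of_pos ht _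
  rw [eA, eB]
  field_simp
  ring

/-- for q > 3, g' changes sign exactly twice on [x₀, x₁]:
g' < 0 on (x₀, a), g' > 0 on (a, b), g' < 0 on (b, x₁) for some x₀ < a < b < x₁. -/
theorem stmt_10 (q α : ℝ) (hq : 3 < q) (hα : α ∈ Ioo (0 : ℝ) (alphaStar q)) :
    let g : ℝ → ℝ := fun t => psiQ q α t ^ 2 / t ^ (q - 3)
    ∃ a b : ℝ, x0 q α < a ∧ a < b ∧ b < x1 q α ∧
      (∀ t ∈ Ioo (x0 q α) a, deriv g t < 0) ∧
      (∀ t ∈ Ioo a b, 0 < deriv g t) ∧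
      (∀ t ∈ Ioo b (x1 q α), deriv g t < 0) := by
  intro g
  obtain ⟨hα0, hαs⟩ := hα
  have hq2 : (2:ℝ) < q := by linarith
  have hq0 : (0:ℝ) < q := by linarith
  have hqm2 : (0:ℝ) < q - 2 := by linarith
  have hqm3 : (0:ℝ) < q - 3 := by linarith
  have hαq : (0:ℝ) < α * q := by positivity
  have hcψ : (0:ℝ) < 2 * α * q * (q - 1) * (q - 2) :=
    mul_pos (mul_pos (mul_pos (mul_pos (by norm_num : (0:ℝ) < 2) hα0) hq0)
      (by linarith : (0:ℝ) < q - 1)) hqm2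
  -- the witness point where f is positive
  set w : ℝ := (2 / (α * q)) ^ (q - 2)⁻¹ with hw
  have hwbase : (0:ℝ) < 2 / (α * q) := by positivity
  have hw0 : 0 < w := Real.rpow_pos_of_pos hwbase _
  have hwq2 : w ^ (q - 2) = 2 / (α * q) := by
    rw [hw, ← Real.rpow_mul hwbase.le, inv_mul_cancel₀ hqm2.ne', Real.rpow_one]
  set L : ℝ := ((q - 2) / q) ^ ((q - 2) / 2) with hL
  have hLbase : (0:ℝ) < (q - 2) / q := div_pos hqm2 hq0
  have hLpos : 0 < L := Real.rpow_pos_of_pos hLbase _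
  have hqne : q ≠ 0 := ne_of_gt hq0
  have hq2ne : q - 2 ≠ 0 := ne_of_gt hqm2
  have hstar : alphaStar q = 2 / q * L := by
    rw [hL, alphaStar, show q / 2 = (q - 2) / 2 + 1 by ring,
      Real.rpow_add hLbase, Real.rpow_one]
    field_simp
  have h2L : α * q < 2 * L := by
    rw [hstar] at hαs
    have h := mul_lt_mul_of_pos_right hαs hq0
    have e : 2 / q * L * q = 2 * L := by field_simp
    rw [e] at h; exact h
  have hkey : (q / (q - 2)) ^ ((q - 2) / 2) < 2 / (α * q) := by
    have e : (q / (q - 2)) ^ ((q - 2) / 2) = L⁻¹ := by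
      rw [show q / (q - 2) = ((q - 2) / q)⁻¹ by rw [inv_div], Real.inv_rpow hLbase.le, hL]
    rw [e, inv_eq_one_div, div_lt_div_iff₀ hLpos hαq]
    linarith
  have hfw : 0 < 1 * w ^ 2 - 1 - α * w ^ q := by
    have hw2 : (w:ℝ) ^ (2:ℕ) = (2 / (α * q)) ^ (2 / (q - 2)) := by
      rw [← Real.rpow_natCast w 2, hw, ← Real.rpow_mul hwbase.le]
      congr 1
      push_cast; field_simp
    have hK2 : q / (q - 2) = ((q / (q - 2)) ^ ((q - 2) / 2)) ^ (2 / (q - 2)) := by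
      rw [← Real.rpow_mul (by positivity : (0:ℝ) ≤ q / (q - 2)),
        show (q - 2) / 2 * (2 / (q - 2)) = 1 by field_simp, Real.rpow_one]
    have hw2gt : q / (q - 2) < w ^ (2:ℕ) := by
      rw [hw2, hK2]
      exact Real.rpow_lt_rpow (Real.rpow_pos_of_pos (by positivity) _).le hkey (by positivity)
    have hwq : α * w ^ q = 2 * w ^ (2:ℕ) / q := by
      have e : w ^ q = w ^ (2:ℕ) * w ^ (q - 2) := by
        rw [← Real.rpow_natCast w 2, ← Real.rpow_add hw0]
        congr 1; push_cast; ring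
      rw [e, hwq2]
      field_simp
    rw [hwq]
    have h1 : q / (q - 2) * (q - 2) = q := by field_simp
    have h2 : (w ^ (2:ℕ)) * (q - 2) > q := by
      calc (w ^ (2:ℕ)) * (q - 2) > (q / (q - 2)) * (q - 2) := by
            exact mul_lt_mul_of_pos_right hw2gt hqm2
      _ = q := h1
    have e : 1 * w ^ 2 - 1 - 2 * w ^ 2 / q = (w ^ 2 * (q - 2) - q) / q := by
      field_simp; ring
    rw [e]
    apply div_pos (by linarith) hq0
  obtain ⟨r₀, m, r₁, hr₀0, hr₀m, hmr₁, hmq, hfr₀, hfr₁, hneg₀, hpos, hneg₁, huniq⟩ :=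
    quad_rpow_roots q 1 1 α hq2 one_pos one_pos hα0 ⟨w, hw0, hfw⟩
  have hfeq : ∀ t : ℝ, 1 * t ^ 2 - 1 - α * t ^ q = fQ q α t := by
    intro t; unfold fQ; ring
  have hfr₀' : fQ q α r₀ = 0 := by rw [← hfeq]; exact hfr₀
  have hfr₁' : fQ q α r₁ = 0 := by rw [← hfeq]; exact hfr₁
  have hr₀r₁ : r₀ < r₁ := lt_trans hr₀m hmr₁
  have hset : {t : ℝ | 0 < t ∧ fQ q α t = 0} = {r₀, r₁} := by
    ext t
    simp only [mem_setOf_eq, mem_insert_iff, mem_singleton_iff]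
    constructor
    · rintro ⟨ht0, htf⟩
      exact huniq t ht0 (by rw [hfeq]; exact htf)
    · rintro (rfl | rfl)
      exacts [⟨hr₀0, hfr₀'⟩, ⟨lt_trans hr₀0 hr₀r₁, hfr₁'⟩]
  have hx0 : x0 q α = r₀ := by
    rw [x0, hset, csInf_pair]; exact min_eq_left hr₀r₁.le
  have hx1 : x1 q α = r₁ := by
    rw [x1, hset, csSup_pair]; exact max_eq_right hr₀r₁.le
  rw [hx0, hx1]
  -- ψ is positive on [r₀, r₁]
  have hψx₀ : 0 < psiQ q α r₀ := by
    have hd1 : 0 < fQd1 q α r₀ := by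
      have e1 : r₀ ^ (q - 1) = r₀ * r₀ ^ (q - 2) := by
        rw [show q - 1 = 1 + (q - 2) by ring, Real.rpow_add hr₀0, Real.rpow_one]
      have h2 : r₀ ^ (q - 2) < 2 * 1 / (α * q) := by
        rw [← hmq]; exact Real.rpow_lt_rpow hr₀0.le hr₀m hqm2
      have h3 : α * q * r₀ ^ (q - 2) < 2 := by
        have := (lt_div_iff₀ hαq).mp h2
        linarith
      unfold fQd1
      rw [e1]
      have hgt : 0 < (2 - α * q * r₀ ^ (q - 2)) * r₀ := mul_pos (by linarith) hr₀0
      linarith [hgt]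
    unfold psiQ
    rw [hfr₀']
    simp only [mul_zero, zero_mul, sub_zero]
    exact pow_pos hd1 2
  have hψmono : StrictMonoOn (psiQ q α) (Icc r₀ r₁) := by
    apply strictMonoOn_of_deriv_pos (convex_Icc _ _)
    · intro x hx
      exact (hasDerivAt_psiQ q α (lt_of_lt_of_le hr₀0 hx.1)).continuousAt.continuousWithinAt
    · intro x hx
      rw [interior_Icc] at hx
      have hx0' : 0 < x := lt_trans hr₀0 hx.1
      rw [(hasDerivAt_psiQ q α hx0').deriv]
      have hf : 0 < fQ q α x := by rw [← hfeq]; exact hpos x hx.1 hx.2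
      exact mul_pos (mul_pos hcψ (Real.rpow_pos_of_pos hx0' _)) hf
  have hψpos : ∀ t ∈ Icc r₀ r₁, 0 < psiQ q α t := by
    intro t ht
    rcases eq_or_lt_of_le ht.1 with h | h
    · rw [← h]; exact hψx₀
    · exact lt_trans hψx₀ (hψmono (left_mem_Icc.mpr hr₀r₁.le) ht h)
  -- values of H
  have hHx₀ : HQ q α r₀ < 0 := by
    unfold HQ
    rw [hfr₀']
    simp only [mul_zero, zero_sub]
    exact neg_lt_zero.mpr (mul_pos hqm3 hψx₀)
  have hHx₁ : HQ q α r₁ < 0 := by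
    unfold HQ
    rw [hfr₁']
    simp only [mul_zero, zero_sub]
    exact neg_lt_zero.mpr (mul_pos hqm3 (hψpos r₁ (right_mem_Icc.mpr hr₀r₁.le)))
  have hm0 : 0 < m := lt_trans hr₀0 hr₀m
  have hmq' : m ^ (q - 2) = 2 / (α * q) := by rw [hmq]; norm_num
  have hfm : 0 < fQ q α m := by rw [← hfeq]; exact hpos m hr₀m hmr₁
  have hmq1 : m ^ (q - 1) = m * (2 / (α * q)) := by
    rw [show q - 1 = 1 + (q - 2) by ring, Real.rpow_add hm0, Real.rpow_one, hmq']
  have hd1m : fQd1 q α m = 0 := by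
    unfold fQd1
    rw [hmq1]
    field_simp
    linarith
  have hd2m : fQd2 q α m = 2 - 2 * (q - 1) := by
    unfold fQd2; rw [hmq']; field_simp
  have hψm : psiQ q α m = 4 * (q - 2) * fQ q α m := by
    unfold psiQ; rw [hd1m, hd2m]; ring
  have hHm : 0 < HQ q α m := by
    have e : HQ q α m = 4 * (q + 1) * ((q - 2) * fQ q α m) := by
      unfold HQ
      rw [hψm, hmq']
      field_simp
      ring
    rw [e]
    exact mul_pos (by linarith) (mul_pos hqm2 hfm)
  -- continuity of H
  have hHcont : ∀ u v : ℝ, 0 < u → ContinuousOn (HQ q α) (Icc u v) := fun u v hu x hx =>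
    (hasDerivAt_HQ q α (lt_of_lt_of_le hu hx.1)).continuousAt.continuousWithinAt
  -- φ is positive somewhere on (r₀, m)
  obtain ⟨c, hcmem, hc⟩ := exists_hasDerivAt_eq_slope (HQ q α)
    (fun t => 2 * α * q * (q - 1) * (q - 2) * t ^ (q - 3) * phiQ q α t) hr₀m
    (hHcont _ _ hr₀0) (fun x hx => hasDerivAt_HQ q α (lt_trans hr₀0 hx.1))
  have hc0 : 0 < c := lt_trans hr₀0 hcmem.1
  have hφc : 0 < phiQ q α c := by
    have hslope : 0 < (HQ q α m - HQ q α r₀) / (m - r₀) :=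
      div_pos (by linarith) (by linarith)
    rw [← hc] at hslope
    have hP : 0 < 2 * α * q * (q - 1) * (q - 2) * c ^ (q - 3) :=
      mul_pos hcψ (Real.rpow_pos_of_pos hc0 _)
    exact pos_of_mul_pos_right hslope hP.le
  -- φ is negative somewhere on (m, r₁)
  obtain ⟨d, hdmem, hd⟩ := exists_hasDerivAt_eq_slope (HQ q α)
    (fun t => 2 * α * q * (q - 1) * (q - 2) * t ^ (q - 3) * phiQ q α t) hmr₁
    (hHcont _ _ hm0) (fun x hx => hasDerivAt_HQ q α (lt_trans hm0 hx.1))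
  have hd0 : 0 < d := lt_trans hm0 hdmem.1
  have hφd : phiQ q α d < 0 := by
    have hslope : (HQ q α r₁ - HQ q α m) / (r₁ - m) < 0 :=
      div_neg_of_neg_of_pos (by linarith) (by linarith)
    rw [← hd] at hslope
    have hP : 0 < 2 * α * q * (q - 1) * (q - 2) * d ^ (q - 3) :=
      mul_pos hcψ (Real.rpow_pos_of_pos hd0 _)
    exact neg_of_mul_neg_right hslope hP.le
  -- generic analysis of φ
  have hC : 0 < α * (3 * q - 1) := mul_pos hα0 (by linarith)
  obtain ⟨p, mφ, r, hp0, hpmφ, hmφr, hmφq, hφp, hφr, hφneg₀, hφpos, hφneg₁, hφuniq⟩ :=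
    quad_rpow_roots q (q + 3) (q - 1) (α * (3 * q - 1)) hq2 (by linarith) (by linarith) hC
      ⟨c, hc0, by unfold phiQ at hφc; exact hφc⟩
  have hφeq : ∀ t : ℝ, (q + 3) * t ^ 2 - (q - 1) - α * (3 * q - 1) * t ^ q = phiQ q α t := by
    intro t; unfold phiQ; ring
  -- locate c and d relative to p and r
  have hpc : p < c := by
    by_contra h
    push_neg at h
    rcases eq_or_lt_of_le h with h2 | h2
    · rw [← hφeq] at hφc
      rw [← h2] at hφp
      linarith
    · have := hφneg₀ c hc0 h2
      rw [hφeq] at this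
      linarith
  have hcr : c < r := by
    by_contra h
    push_neg at h
    rcases eq_or_lt_of_le h with h2 | h2
    · rw [← hφeq] at hφc
      rw [h2] at hφr
      linarith
    · have := hφneg₁ c h2
      rw [hφeq] at this
      linarith
  have hrd : r < d := by
    by_contra h
    push_neg at h
    have hpd : p < d := lt_trans (lt_trans hpc hcmem.2) hdmem.1
    rcases eq_or_lt_of_le h with h2 | h2
    · rw [← hφeq, h2] at hφd
      linarith
    · have := hφpos d hpd h2
      rw [hφeq] at this
      linarith
  have hrr₁ : r < r₁ := lt_trans hrd hdmem.2
  have hr0' : 0 < r := lt_trans hc0 hcr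
  -- the max point p'
  set p' : ℝ := max r₀ p with hp'
  have hp'0 : 0 < p' := lt_of_lt_of_le hr₀0 (le_max_left _ _)
  have hp'c : p' < c := max_lt hcmem.1 hpc
  have hp'r : p' < r := lt_trans hp'c hcr
  -- monotonicity of H on the three pieces
  have hHanti₁ : StrictAntiOn (HQ q α) (Icc r₀ p') := by
    apply strictAntiOn_of_deriv_neg (convex_Icc _ _) (hHcont _ _ hr₀0)
    intro t ht
    rw [interior_Icc] at ht
    have ht0 : 0 < t := lt_trans hr₀0 ht.1
    rw [(hasDerivAt_HQ q α ht0).deriv]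
    have htp : t < p := by
      rcases le_or_gt p r₀ with h | h
      · exfalso
        have e : p' = r₀ := max_eq_left h
        rw [e] at ht
        exact absurd ht.2 (not_lt.mpr ht.1.le)
      · have e : p' = p := max_eq_right h.le
        rw [← e]; exact ht.2
    have hφ := hφneg₀ t ht0 htp
    rw [hφeq] at hφ
    have hP : 0 < 2 * α * q * (q - 1) * (q - 2) * t ^ (q - 3) :=
      mul_pos hcψ (Real.rpow_pos_of_pos ht0 _)
    exact mul_neg_of_pos_of_neg hP hφ
  have hHmono : StrictMonoOn (HQ q α) (Icc p' r) := by
    apply strictMonoOn_of_deriv_pos (convex_Icc _ _) (hHcont _ _ hp'0)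
    intro t ht
    rw [interior_Icc] at ht
    have ht0 : 0 < t := lt_trans hp'0 ht.1
    have htp : p < t := lt_of_le_of_lt (le_max_right _ _) ht.1
    rw [(hasDerivAt_HQ q α ht0).deriv]
    have hφ := hφpos t htp ht.2
    rw [hφeq] at hφ
    have hP : 0 < 2 * α * q * (q - 1) * (q - 2) * t ^ (q - 3) :=
      mul_pos hcψ (Real.rpow_pos_of_pos ht0 _)
    exact mul_pos hP hφ
  have hHanti₂ : StrictAntiOn (HQ q α) (Icc r r₁) := by
    apply strictAntiOn_of_deriv_neg (convex_Icc _ _) (hHcont _ _ hr0')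
    intro t ht
    rw [interior_Icc] at ht
    have ht0 : 0 < t := lt_trans hr0' ht.1
    rw [(hasDerivAt_HQ q α ht0).deriv]
    have hφ := hφneg₁ t ht.1
    rw [hφeq] at hφ
    have hP : 0 < 2 * α * q * (q - 1) * (q - 2) * t ^ (q - 3) :=
      mul_pos hcψ (Real.rpow_pos_of_pos ht0 _)
    exact mul_neg_of_pos_of_neg hP hφ
  -- H at p' and r
  have hHp' : HQ q α p' < 0 := by
    rcases le_or_gt p r₀ with h | h
    · rw [hp', max_eq_left h]; exact hHx₀
    · have hr₀p' : r₀ < p' := by rw [hp', max_eq_right h.le]; exact h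
      have h2 := hHanti₁ (left_mem_Icc.mpr (le_max_left _ _))
        (right_mem_Icc.mpr (le_max_left _ _)) hr₀p'
      linarith
  have hHr : 0 < HQ q α r := by
    rcases le_or_gt m r with h | h
    · have hp'm : p' < m := max_lt hr₀m (lt_trans hpc hcmem.2)
      have h2 := hHmono.monotoneOn (mem_Icc.mpr ⟨hp'm.le, h⟩) (right_mem_Icc.mpr hp'r.le) h
      linarith
    · have h2 := hHanti₂.antitoneOn (left_mem_Icc.mpr hrr₁.le)
        (mem_Icc.mpr ⟨h.le, hmr₁.le⟩) h.le
      linarith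
  -- the two roots of H
  obtain ⟨a, hamem, ha⟩ := intermediate_value_Ioo hp'r.le (hHcont _ _ hp'0)
    (⟨hHp', hHr⟩ : (0:ℝ) ∈ Ioo (HQ q α p') (HQ q α r))
  obtain ⟨b, hbmem, hb⟩ := intermediate_value_Ioo' hrr₁.le (hHcont _ _ hr0')
    (⟨hHx₁, hHr⟩ : (0:ℝ) ∈ Ioo (HQ q α r₁) (HQ q α r))
  have ha : HQ q α a = 0 := ha
  have hb : HQ q α b = 0 := hb
  -- sign transfer to deriv g
  have hgsign : ∀ t, r₀ < t → t < r₁ →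
      (HQ q α t < 0 → deriv g t < 0) ∧ (0 < HQ q α t → 0 < deriv g t) := by
    intro t h1 h2
    have ht0 : 0 < t := lt_trans hr₀0 h1
    have hψ := hψpos t (mem_Icc.mpr ⟨h1.le, h2.le⟩)
    have hpow : 0 < t ^ (q - 2) := Real.rpow_pos_of_pos ht0 _
    have hg : deriv g t = psiQ q α t * HQ q α t / t ^ (q - 2) := deriv_gQ q α ht0
    constructor
    · intro hH; rw [hg]; exact div_neg_of_neg_of_pos (mul_neg_of_pos_of_neg hψ hH) hpow
    · intro hH; rw [hg]; exact div_pos (mul_pos hψ hH) hpow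
  refine ⟨a, b, lt_of_le_of_lt (le_max_left _ _) hamem.1,
    lt_trans hamem.2 hbmem.1, hbmem.2, ?_, ?_, ?_⟩
  · intro t ht
    obtain ⟨ht1, ht2⟩ := ht
    have hta : t < r₁ := lt_trans (lt_trans ht2 (lt_trans hamem.2 hbmem.1)) hbmem.2
    refine (hgsign t ht1 hta).1 ?_
    rcases le_or_gt t p' with h | h
    · have h2 := hHanti₁ (left_mem_Icc.mpr (le_max_left _ _)) (mem_Icc.mpr ⟨ht1.le, h⟩) ht1
      linarith
    · have h2 := hHmono (mem_Icc.mpr ⟨h.le, (lt_trans ht2 hamem.2).le⟩)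
        (mem_Icc.mpr ⟨hamem.1.le, hamem.2.le⟩) ht2
      rw [ha] at h2; exact h2
  · intro t ht
    obtain ⟨ht1, ht2⟩ := ht
    have h0 : r₀ < t := lt_trans (lt_of_le_of_lt (le_max_left _ _) hamem.1) ht1
    have h3 : t < r₁ := lt_trans ht2 hbmem.2
    refine (hgsign t h0 h3).2 ?_
    rcases le_or_gt t r with h | h
    · have h2 := hHmono (mem_Icc.mpr ⟨hamem.1.le, hamem.2.le⟩)
        (mem_Icc.mpr ⟨le_trans hamem.1.le ht1.le, h⟩) ht1
      rw [ha] at h2; exact h2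
    · have h2 := hHanti₂ (mem_Icc.mpr ⟨h.le, h3.le⟩)
        (mem_Icc.mpr ⟨hbmem.1.le, hbmem.2.le⟩) ht2
      rw [hb] at h2; exact h2
  · intro t ht
    obtain ⟨ht1, ht2⟩ := ht
    have h0 : r₀ < t := by
      have h4 : r₀ < b := lt_trans (lt_of_le_of_lt (le_max_left _ _) hamem.1)
        (lt_trans hamem.2 hbmem.1)
      linarith
    refine (hgsign t h0 ht2).1 ?_
    have h2 := hHanti₂ (mem_Icc.mpr ⟨hbmem.1.le, hbmem.2.le⟩)
      (mem_Icc.mpr ⟨(lt_trans hbmem.1 ht1).le, ht2.le⟩) ht1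
    rw [hb] at h2; exact h2
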